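/- Let G = (V, E) be a finite undirected graph, let c > 0, and for each i ∈ V let d_i denote the degree of node i and N_i its neighbor set; let A_{ij} ∈ {−1,1} with A_{ji} = −A_{ij} for each edge, and let s : V → ℝ. Suppose sequences (x_i^{(t)})_{t≥0}, (z_{i|j}^{(t)})_{t≥0} for all directed edges, and (z_{i|i'}^{(t)})_{t≥0} for all dummy edges satisfy, for all t ≥ 0 and all nodes i, j: the primal update x_i^{(t+1)} = ( −1 − Σ_{k ∈ N_i} A_{ik} z_{i|k}^{(t)} + z_{i|i'}^{(t)} + (1/2) c s_i ) / ( c (d_i + 1) ), and the regular-edge update z_{j|i}^{(t+1)} = (1/2) z_{j|i}^{(t)} + (1/2)( z_{i|j}^{(t)} + 2 c A_{ij} x_i^{(t+1)} ). Then for every node j and every t ≥ 1, x_j^{(t+2)} − x_j^{(t+1)} = [ c Σ_{k ∈ N_j} ( x_k^{(t+1)} − (1/2) x_k^{(t)} − (1/2) x_j^{(t)} ) + ( z_{j|j'}^{(t+1)} − z_{j|j'}^{(t)} ) ] / ( c (d_j + 1) ). -/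
import Mathlib


/-- eq. (11) in the paper: on the augmented graph, under the
IEQ-PDMM primal update
`x_i^{(t+1)} = (−1 − ∑_{k∈N_i} A_{ik} z_{i|k}^{(t)} + z_{i|i'}^{(t)} + (1/2) c s_i)/(c (d_i + 1))`
and the regular-edge auxiliary update
`z_{j|i}^{(t+1)} = (1/2) z_{j|i}^{(t)} + (1/2)(z_{i|j}^{(t)} + 2 c A_{ij} x_i^{(t+1)})`,
for every node `j` and every `t ≥ 1`,
`x_j^{(t+2)} − x_j^{(t+1)} = (c ∑_{k∈N_j} (x_k^{(t+1)} − (1/2) x_k^{(t)} − (1/2) x_j^{(t)})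
  + (z_{j|j'}^{(t+1)} − z_{j|j'}^{(t)})) / (c (d_j + 1))`. -/
theorem pdmm_primal_successive_differences
    {V : Type*} [Fintype V] [DecidableEq V]
    (G : SimpleGraph V) [DecidableRel G.Adj]
    (c : ℝ) (hc : 0 < c) (s : V → ℝ) (A : V → V → ℝ)
    (hA1 : ∀ i j : V, G.Adj i j → A i j = 1 ∨ A i j = -1)
    (hA2 : ∀ i j : V, G.Adj i j → A j i = -A i j)
    (x : V → ℕ → ℝ) (z : V → V → ℕ → ℝ) (zd : V → ℕ → ℝ)
    (hx : ∀ (i : V) (t : ℕ),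
      x i (t + 1) =
        (-1 - (∑ k ∈ G.neighborFinset i, A i k * z i k t) + zd i t + 1 / 2 * c * s i) /
          (c * (G.degree i + 1)))
    (hz : ∀ (i j : V) (t : ℕ), G.Adj i j →
      z j i (t + 1) = 1 / 2 * z j i t + 1 / 2 * (z i j t + 2 * c * A i j * x i (t + 1))) :
    ∀ (j : V) (t : ℕ), 1 ≤ t →
      x j (t + 2) - x j (t + 1) =
        (c * (∑ k ∈ G.neighborFinset j, (x k (t + 1) - 1 / 2 * x k t - 1 / 2 * x j t)) +
            (zd j (t + 1) - zd j t)) /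
          (c * (G.degree j + 1)) := by
  intro j t ht
  obtain ⟨n, rfl⟩ : ∃ n, t = n + 1 := ⟨t - 1, (Nat.succ_pred_eq_of_pos ht).symm⟩
  have key : ∀ k ∈ G.neighborFinset j,
      A j k * z j k (n + 1 + 1) - A j k * z j k (n + 1)
        = -(c * (x k (n + 1 + 1) - 1 / 2 * x k (n + 1) - 1 / 2 * x j (n + 1))) := by
    intro k hk
    rw [SimpleGraph.mem_neighborFinset] at hk
    have h1 := hz k j (n + 1) hk.symm
    have h2 := hz k j n hk.symm
    have h3 := hz j k n hk
    have hAs := hA2 j k hk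
    rcases hA1 j k hk with h | h <;> rw [h1, h2, h3, hAs, h] <;> ring
  have hsum : (∑ k ∈ G.neighborFinset j, A j k * z j k (n + 1 + 1))
      - (∑ k ∈ G.neighborFinset j, A j k * z j k (n + 1))
      = -(c * ∑ k ∈ G.neighborFinset j,
          (x k (n + 1 + 1) - 1 / 2 * x k (n + 1) - 1 / 2 * x j (n + 1))) := by
    rw [← Finset.sum_sub_distrib, Finset.mul_sum, ← Finset.sum_neg_distrib]
    exact Finset.sum_congr rfl key
  have e1 := hx j (n + 1 + 1)
  have e2 := hx j (n + 1)
  rw [show n + 1 + 2 = n + 1 + 1 + 1 by ring] at *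
  rw [e1, e2, div_sub_div_same]
  congr 1
  linarith [hsum]
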